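/- arXiv:1810.12701 — 2 statements merged into one kernel-verified Lean document; each statement's English description precedes it below -/
import Mathlib

section
/- For all integers n > k ≥ 1, b(n,k) = (1/k) · ∑_{k'=1}^{k} b(n−k, k'). -/
open scoped BigOperators

/-- `bk n k` is the sum, over all integer partitions of `n` whose largest part equals `k`,
of the reciprocal of the product of the parts.  (If no partition of `n` has largest part `k`,
in particular if `k > n ≥ 1` or `n = 0` and `k ≥ 1`, this sum is empty and `bk n k = 0`.) -/
noncomputable def bk (n k : ℕ) : ℝ :=
  ∑ p : Nat.Partition n,
    if p.parts.sup = k then (p.parts.map fun i => (1 : ℝ) / i).prod else 0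

lemma multiset_sup_mem_nat {s : Multiset ℕ} (hs : s ≠ 0) : s.sup ∈ s := by
  induction s using Multiset.induction with
  | empty => simp at hs
  | cons a s ih =>
    rw [Multiset.sup_cons]
    by_cases h : s = 0
    · subst h; simp
    · rcases le_total a s.sup with h' | h'
      · rw [sup_eq_right.mpr h']; exact Multiset.mem_cons_of_mem (ih h)
      · rw [sup_eq_left.mpr h']; exact Multiset.mem_cons_self a s

/-- Remove one part equal to `k` from a partition of `n`. -/
def removeK (n k : ℕ) (p : Nat.Partition n) (hmem : k ∈ p.parts) :
    Nat.Partition (n - k) where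
  parts := p.parts.erase k
  parts_pos := fun hi => p.parts_pos (Multiset.mem_of_mem_erase hi)
  parts_sum := by
    have h1 := Multiset.cons_erase hmem
    have h2 : k + (p.parts.erase k).sum = n := by
      have := congrArg Multiset.sum h1
      rw [Multiset.sum_cons, p.parts_sum] at this
      exact this
    omega

/-- Add one part equal to `k` to a partition of `m`. -/
def addK (n k m : ℕ) (h : k + m = n) (hk : 1 ≤ k) (q : Nat.Partition m) :
    Nat.Partition n where
  parts := k ::ₘ q.parts
  parts_pos := fun hi => by
    rcases Multiset.mem_cons.mp hi with h' | h'
    · omega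
    · exact q.parts_pos h'
  parts_sum := by rw [Multiset.sum_cons, q.parts_sum, h]

theorem stmt2 (n k : ℕ) (hk : 1 ≤ k) (hkn : k < n) :
    bk n k = (1 / (k : ℝ)) * ∑ k' ∈ Finset.Icc 1 k, bk (n - k) k' := by
  have hm : 1 ≤ n - k := by omega
  have hadd : k + (n - k) = n := by omega
  have hR : ∑ k' ∈ Finset.Icc 1 k, bk (n - k) k'
      = ∑ q : Nat.Partition (n - k),
          if q.parts.sup ≤ k then (q.parts.map fun i => (1 : ℝ) / i).prod else 0 := by
    unfold bk
    rw [Finset.sum_comm]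
    refine Finset.sum_congr rfl fun q _ => ?_
    have hne : q.parts ≠ 0 := by
      intro h
      have := q.parts_sum
      rw [h] at this
      simp at this
      omega
    have hq1 : 1 ≤ q.parts.sup := q.parts_pos (multiset_sup_mem_nat hne)
    rw [Finset.sum_ite_eq]
    simp only [Finset.mem_Icc]
    by_cases h : q.parts.sup ≤ k
    · rw [if_pos ⟨hq1, h⟩, if_pos h]
    · rw [if_neg (by omega), if_neg h]
  rw [hR]
  unfold bk
  rw [Finset.mul_sum]
  simp only [mul_ite, mul_zero]
  rw [← Finset.sum_filter, ← Finset.sum_filter]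
  have hk0 : (k : ℝ) ≠ 0 := by positivity
  have hmemk : ∀ p : Nat.Partition n, p.parts.sup = k → k ∈ p.parts := by
    intro p hp
    have hne : p.parts ≠ 0 := by
      intro h
      rw [h] at hp
      simp [Multiset.sup_zero] at hp
      omega
    rw [← hp]
    exact multiset_sup_mem_nat hne
  refine Finset.sum_bij'
    (i := fun p hp => removeK n k p (hmemk p (by simpa using hp)))
    (j := fun q hq => addK n k (n - k) hadd hk q)
    ?_ ?_ ?_ ?_ ?_
  · intro p hp
    simp only [Finset.mem_filter, Finset.mem_univ, true_and] at hp ⊢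
    refine Multiset.sup_le.mpr fun a ha => ?_
    rw [← hp]
    exact Multiset.le_sup (Multiset.mem_of_mem_erase ha)
  · intro q hq
    simp only [Finset.mem_filter, Finset.mem_univ, true_and] at hq ⊢
    show (k ::ₘ q.parts).sup = k
    rw [Multiset.sup_cons]
    exact sup_eq_left.mpr hq
  · intro p hp
    simp only [Finset.mem_filter, Finset.mem_univ, true_and] at hp
    ext1
    show k ::ₘ (p.parts.erase k) = p.parts
    exact Multiset.cons_erase (hmemk p hp)
  · intro q hq
    ext1
    show (k ::ₘ q.parts).erase k = q.parts
    exact Multiset.erase_cons_head k q.parts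
  · intro p hp
    simp only [Finset.mem_filter, Finset.mem_univ, true_and] at hp
    show (p.parts.map fun i => (1 : ℝ) / i).prod
      = 1 / (k : ℝ) * ((p.parts.erase k).map fun i => (1 : ℝ) / i).prod
    conv_lhs => rw [← Multiset.cons_erase (hmemk p hp)]
    simp
end

section
/- For all integers n ≥ k ≥ 2, b(n,k) = ((k−1)/k) · b(n−1, k−1) + (1/k) · b(n−k, k). -/
open scoped BigOperators

/-- Sum over partitions of `n` with all parts at most `k` of the reciprocal of the product. -/
noncomputable def ak (n k : ℕ) : ℝ :=
  ∑ p : Nat.Partition n,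
    if p.parts.sup ≤ k then (p.parts.map fun i => (1 : ℝ) / i).prod else 0

lemma multiset_sup_mem (s : Multiset ℕ) (hs : s ≠ 0) : s.sup ∈ s := by
  induction s using Multiset.induction_on with
  | empty => exact absurd rfl hs
  | cons a s ih =>
    rw [Multiset.sup_cons]
    rcases eq_or_ne s 0 with rfl | h
    · simp
    · rcases le_total a s.sup with hle | hle
      · rw [sup_eq_right.mpr hle]
        exact Multiset.mem_cons_of_mem (ih h)
      · rw [sup_eq_left.mpr hle]
        exact Multiset.mem_cons_self a s

lemma ak_split (n k : ℕ) (hk : 1 ≤ k) :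
    ak n k = ak n (k - 1) + bk n k := by
  rw [ak, ak, bk, ← Finset.sum_add_distrib]
  refine Finset.sum_congr rfl fun p _ => ?_
  rcases lt_trichotomy p.parts.sup k with h | h | h
  · rw [if_pos h.le, if_pos (by omega), if_neg (by omega), add_zero]
  · rw [if_pos h.le, if_neg (by omega), if_pos h, zero_add]
  · rw [if_neg (by omega), if_neg (by omega), if_neg (by omega), add_zero]

/-- Adding one part equal to `k` to a partition of `m`. -/
def addPart (m k : ℕ) (hk : 1 ≤ k) (p : Nat.Partition m) : Nat.Partition (m + k) where
  parts := k ::ₘ p.parts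
  parts_pos := by
    intro i hi
    rcases Multiset.mem_cons.mp hi with rfl | h
    · omega
    · exact p.parts_pos h
  parts_sum := by rw [Multiset.sum_cons, p.parts_sum, Nat.add_comm]

/-- Removing one part equal to `k` from a partition of `m + k`. -/
def delPart (m k : ℕ) (q : Nat.Partition (m + k)) (h : k ∈ q.parts) : Nat.Partition m where
  parts := q.parts.erase k
  parts_pos := fun hi => q.parts_pos (Multiset.mem_of_mem_erase hi)
  parts_sum := by
    have h1 : (k ::ₘ q.parts.erase k).sum = m + k := by
      rw [Multiset.cons_erase h, q.parts_sum]
    rw [Multiset.sum_cons] at h1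
    omega

lemma mem_of_sup_eq (m k : ℕ) (hk : 1 ≤ k) (q : Nat.Partition (m + k))
    (hq : q.parts.sup = k) : k ∈ q.parts := by
  have hne : q.parts ≠ 0 := by
    intro h0
    rw [h0] at hq
    simp at hq
    omega
  have := multiset_sup_mem _ hne
  rwa [hq] at this

lemma bk_eq (m k : ℕ) (hk : 1 ≤ k) :
    bk (m + k) k = (1 / (k : ℝ)) * ak m k := by
  rw [bk, ak, ← Finset.sum_filter, ← Finset.sum_filter, Finset.mul_sum]
  refine Finset.sum_bij'
    (i := fun q hq => delPart m k q (mem_of_sup_eq m k hk q (Finset.mem_filter.mp hq).2))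
    (j := fun p hp => addPart m k hk p) ?_ ?_ ?_ ?_ ?_
  · intro q hq
    have hq' := (Finset.mem_filter.mp hq).2
    refine Finset.mem_filter.mpr ⟨Finset.mem_univ _, ?_⟩
    refine Multiset.sup_le.mpr fun b hb => ?_
    rw [← hq']
    exact Multiset.le_sup (Multiset.mem_of_mem_erase hb)
  · intro p hp
    have hp' := (Finset.mem_filter.mp hp).2
    refine Finset.mem_filter.mpr ⟨Finset.mem_univ _, ?_⟩
    show (k ::ₘ p.parts).sup = k
    rw [Multiset.sup_cons]
    exact sup_eq_left.mpr hp'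
  · intro q hq
    apply Nat.Partition.ext
    exact Multiset.cons_erase (mem_of_sup_eq m k hk q (Finset.mem_filter.mp hq).2)
  · intro p hp
    apply Nat.Partition.ext
    exact Multiset.erase_cons_head k p.parts
  · intro q hq
    have hmem := mem_of_sup_eq m k hk q (Finset.mem_filter.mp hq).2
    have h1 : q.parts = k ::ₘ q.parts.erase k := (Multiset.cons_erase hmem).symm
    rw [show (delPart m k q hmem).parts = q.parts.erase k from rfl]
    conv_lhs => rw [h1]
    simp [Multiset.map_cons, Multiset.prod_cons]

theorem stmt3 (n k : ℕ) (hk : 2 ≤ k) (hkn : k ≤ n) :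
    bk n k = (((k : ℝ) - 1) / k) * bk (n - 1) (k - 1) + (1 / (k : ℝ)) * bk (n - k) k := by
  set m := n - k with hm
  have hn : n = m + k := by omega
  have hn1 : n - 1 = m + (k - 1) := by omega
  have h1 : bk n k = (1 / (k : ℝ)) * ak m k := by rw [hn]; exact bk_eq m k (by omega)
  have h2 : bk (n - 1) (k - 1) = (1 / ((k : ℝ) - 1)) * ak m (k - 1) := by
    rw [hn1]
    have := bk_eq m (k - 1) (by omega)
    rwa [Nat.cast_sub (by omega : 1 ≤ k), Nat.cast_one] at this
  have h3 : ak m k = ak m (k - 1) + bk m k := ak_split m k (by omega)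
  have hk0 : (k : ℝ) ≠ 0 := by positivity
  have hk1 : (k : ℝ) - 1 ≠ 0 := by
    have : (2 : ℝ) ≤ (k : ℝ) := by exact_mod_cast hk
    linarith
  rw [h1, h3, h2]
  field_simp
end
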